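/- In the AI regulation game with separable quadratic costs and no regulation (c0ab = c1ab = 0, with c0aa, c0bb, c1aa, c1bb > 0, rα, rβ > 0, δ ∈ (0,1)), both players invest a strictly positive amount in each attribute: for every γ0 = (α0, β0) ∈ ℝ², the unique maximizer of γ1 ↦ U_D(γ0, γ1) over {(α, β) : α ≥ α0, β ≥ β0} is γ0 + ((1−δ)·rα/(2·c1aa), (1−δ)·rβ/(2·c1bb)), whose increment has strictly positive coordinates; and the unique maximizer of the generalist's composed utility g(γ0) := δ·(r ⬝ᵥ (γ0 + w)) − γ0ᵀ C0 γ0 over {(α, β) : α ≥ 0, β ≥ 0}, where w = ((1−δ)·rα/(2·c1aa), (1−δ)·rβ/(2·c1bb)), is (δ·rα/(2·c0aa), δ·rβ/(2·c0bb)), which has strictly positive coordinates. -/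

import Mathlib

open Matrix

/-- The domain specialist's utility with separable costs `C1 = !![c1aa, 0; 0, c1bb]`. -/
noncomputable def UD (c1aa c1bb rα rβ δ : ℝ) (γ0 γ1 : Fin 2 → ℝ) : ℝ :=
  (1 - δ) * (rα * γ1 0 + rβ * γ1 1)
    - (γ1 - γ0) ⬝ᵥ ((!![c1aa, 0; 0, c1bb] : Matrix (Fin 2) (Fin 2) ℝ) *ᵥ (γ1 - γ0))

/-- The generalist's composed utility with separable costs `C0 = !![c0aa, 0; 0, c0bb]`:
`g(γ0) = δ·(r ⬝ᵥ (γ0 + w)) − γ0ᵀ C0 γ0`. -/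
noncomputable def gComp (c0aa c0bb rα rβ δ : ℝ) (w γ0 : Fin 2 → ℝ) : ℝ :=
  δ * ((![rα, rβ] : Fin 2 → ℝ) ⬝ᵥ (γ0 + w))
    - γ0 ⬝ᵥ ((!![c0aa, 0; 0, c0bb] : Matrix (Fin 2) (Fin 2) ℝ) *ᵥ γ0)

/-- In the separable quadratic-cost game with no regulation, both players invest a
strictly positive amount in each attribute: the specialist's unique best response is
`γ0 + ((1−δ)rα/(2c1aa), (1−δ)rβ/(2c1bb))` and the generalist's unique optimal strategy
is `(δrα/(2c0aa), δrβ/(2c0bb))`. -/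
theorem separable_noreg_positive_investment
    (c0aa c0bb c1aa c1bb rα rβ δ : ℝ)
    (hc0aa : 0 < c0aa) (hc0bb : 0 < c0bb) (hc1aa : 0 < c1aa) (hc1bb : 0 < c1bb)
    (hrα : 0 < rα) (hrβ : 0 < rβ) (hδ0 : 0 < δ) (hδ1 : δ < 1) :
    (0 < (1 - δ) * rα / (2 * c1aa) ∧ 0 < (1 - δ) * rβ / (2 * c1bb)) ∧
    (∀ γ0 γ1 : Fin 2 → ℝ, γ0 0 ≤ γ1 0 → γ0 1 ≤ γ1 1 →
      γ1 ≠ γ0 + ![(1 - δ) * rα / (2 * c1aa), (1 - δ) * rβ / (2 * c1bb)] →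
      UD c1aa c1bb rα rβ δ γ0 γ1 <
        UD c1aa c1bb rα rβ δ γ0
          (γ0 + ![(1 - δ) * rα / (2 * c1aa), (1 - δ) * rβ / (2 * c1bb)])) ∧
    (0 < δ * rα / (2 * c0aa) ∧ 0 < δ * rβ / (2 * c0bb)) ∧
    (∀ γ0 : Fin 2 → ℝ, 0 ≤ γ0 0 → 0 ≤ γ0 1 →
      γ0 ≠ ![δ * rα / (2 * c0aa), δ * rβ / (2 * c0bb)] →
      gComp c0aa c0bb rα rβ δ
          ![(1 - δ) * rα / (2 * c1aa), (1 - δ) * rβ / (2 * c1bb)] γ0 <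
        gComp c0aa c0bb rα rβ δ
          ![(1 - δ) * rα / (2 * c1aa), (1 - δ) * rβ / (2 * c1bb)]
          ![δ * rα / (2 * c0aa), δ * rβ / (2 * c0bb)]) := by
  have h1δ : 0 < 1 - δ := by linarith
  refine ⟨⟨by positivity, by positivity⟩, ?_, ⟨by positivity, by positivity⟩, ?_⟩
  · intro γ0 γ1 h0 h1 hne
    obtain ⟨i, hi⟩ := Function.ne_iff.mp hne
    set A := (1 - δ) * rα / (2 * c1aa) with hAdef
    set B := (1 - δ) * rβ / (2 * c1bb) with hBdef
    have hA : (1 - δ) * rα = 2 * c1aa * A := by rw [hAdef]; field_simp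
    have hB : (1 - δ) * rβ = 2 * c1bb * B := by rw [hBdef]; field_simp
    have heq : UD c1aa c1bb rα rβ δ γ0 (γ0 + ![A, B]) - UD c1aa c1bb rα rβ δ γ0 γ1
        = c1aa * (γ1 0 - (γ0 0 + A))^2 + c1bb * (γ1 1 - (γ0 1 + B))^2 := by
      simp only [UD, dotProduct, mulVec, Fin.sum_univ_two, Pi.sub_apply, Pi.add_apply,
        Matrix.cons_val', Matrix.cons_val_zero, Matrix.cons_val_one, Matrix.head_cons,
        Matrix.empty_val', Matrix.cons_val_fin_one, Matrix.of_apply, Matrix.vecHead]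
      linear_combination (γ0 0 + A - γ1 0) * hA + (γ0 1 + B - γ1 1) * hB
    fin_cases i <;>
      simp only [Pi.add_apply, Matrix.cons_val_zero, Matrix.cons_val_one,
        Matrix.head_cons] at hi
    · have key : 0 < c1aa * (γ1 0 - (γ0 0 + A))^2 := by
        have := sub_ne_zero.mpr hi
        positivity
      have h2 : (0:ℝ) ≤ c1bb * (γ1 1 - (γ0 1 + B))^2 := by positivity
      linarith
    · have key : 0 < c1bb * (γ1 1 - (γ0 1 + B))^2 := by
        have := sub_ne_zero.mpr hi
        positivity
      have h2 : (0:ℝ) ≤ c1aa * (γ1 0 - (γ0 0 + A))^2 := by positivity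
      linarith
  · intro γ0 h0 h1 hne
    obtain ⟨i, hi⟩ := Function.ne_iff.mp hne
    set P := δ * rα / (2 * c0aa) with hPdef
    set Q := δ * rβ / (2 * c0bb) with hQdef
    have hP : δ * rα = 2 * c0aa * P := by rw [hPdef]; field_simp
    have hQ : δ * rβ = 2 * c0bb * Q := by rw [hQdef]; field_simp
    set w : Fin 2 → ℝ := ![(1 - δ) * rα / (2 * c1aa), (1 - δ) * rβ / (2 * c1bb)] with hw
    have heq : gComp c0aa c0bb rα rβ δ w ![P, Q] - gComp c0aa c0bb rα rβ δ w γ0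
        = c0aa * (γ0 0 - P)^2 + c0bb * (γ0 1 - Q)^2 := by
      simp only [gComp, dotProduct, mulVec, Fin.sum_univ_two, Pi.add_apply,
        Matrix.cons_val', Matrix.cons_val_zero, Matrix.cons_val_one, Matrix.head_cons,
        Matrix.empty_val', Matrix.cons_val_fin_one, Matrix.of_apply, Matrix.vecHead]
      linear_combination (P - γ0 0) * hP + (Q - γ0 1) * hQ
    fin_cases i <;>
      simp only [Matrix.cons_val_zero, Matrix.cons_val_one, Matrix.head_cons] at hi
    · have key : 0 < c0aa * (γ0 0 - P)^2 := by
        have := sub_ne_zero.mpr hi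
        positivity
      have h2 : (0:ℝ) ≤ c0bb * (γ0 1 - Q)^2 := by positivity
      linarith
    · have key : 0 < c0bb * (γ0 1 - Q)^2 := by
        have := sub_ne_zero.mpr hi
        positivity
      have h2 : (0:ℝ) ≤ c0aa * (γ0 0 - P)^2 := by positivity
      linarith
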